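/- For every integer s ≥ 1, the chain [2^s, s+4, 2^{s−1}, s+2] (s entries 2, then one entry s+4, then s−1 entries 2, then one entry s+2, of length r = 2s+1) has Hirzebruch–Jung continued fraction (s²+2s+2)² / ((s²+2s+2)(s²+s+1) − 1); hence it is a T-chain with parameters (d, n, a) = (1, s²+2s+2, s²+s+1). (For s = 1 this is the chain [2,5,3] of the paper's Kodaira dimension 1 classification, and for s = 2 it is the chain [2,2,6,2,4] of the Kodaira dimension 0 classification.) -/

import Mathlib

/-- Hirzebruch–Jung continued fraction of a list of integers:
`hjcf [] = 0` (junk value), `hjcf (b :: l) = b - 1 / hjcf l`.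
Since `(0 : ℚ)⁻¹ = 0`, this gives `hjcf [b] = b`, matching the recursion
`[b_r] = b_r`, `[b_1, …, b_r] = b_1 − 1/[b_2, …, b_r]`. -/
def hjcf : List ℤ → ℚ
  | [] => 0
  | b :: l => (b : ℚ) - (hjcf l)⁻¹

/-- `IsTChain l d n a` : the nonempty list `l` of integers, all ≥ 2, is a T-chain
with parameters `(d, n, a)`, i.e. its Hirzebruch–Jung continued fraction equals
`d n² / (d n a − 1)` where `d ≥ 1`, `n ≥ 2`, `0 < a < n`, `gcd(n, a) = 1`. -/
def IsTChain (l : List ℤ) (d n a : ℤ) : Prop :=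
  l ≠ [] ∧ (∀ b ∈ l, 2 ≤ b) ∧
  1 ≤ d ∧ 2 ≤ n ∧ 0 < a ∧ a < n ∧ Int.gcd n a = 1 ∧
  hjcf l = (d * n ^ 2 : ℚ) / (d * n * a - 1)

lemma hjcf_rep2 (l : List ℤ) (h : 1 < hjcf l) (k : ℕ) :
    1 < hjcf (List.replicate k 2 ++ l) ∧
    hjcf (List.replicate k 2 ++ l) =
      ((k + 1) * hjcf l - k) / (k * hjcf l - k + 1) := by
  induction k with
  | zero =>
    constructor
    · simpa using h
    · simp
  | succ k ih =>
    obtain ⟨ih1, ih2⟩ := ih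
    set x := hjcf l with hx
    have hA : (0:ℚ) < (k + 1) * x - k := by
      have : (0:ℚ) ≤ (k:ℚ) := by positivity
      nlinarith
    have hB : (0:ℚ) < (k:ℚ) * x - k + 1 := by
      have : (0:ℚ) ≤ (k:ℚ) := by positivity
      nlinarith
    have hstep : List.replicate (k + 1) 2 ++ l = 2 :: (List.replicate k 2 ++ l) := rfl
    have hv : hjcf (2 :: (List.replicate k 2 ++ l))
        = 2 - (hjcf (List.replicate k 2 ++ l))⁻¹ := by
      simp [hjcf]
    have hvne : hjcf (List.replicate k 2 ++ l) ≠ 0 := by linarith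
    constructor
    · rw [hstep, hv]
      have h1 : (hjcf (List.replicate k 2 ++ l))⁻¹ < 1 := by
        rw [inv_lt_one_iff₀]; right; exact ih1
      linarith
    · rw [hstep, hv, ih2]
      push_cast
      rw [inv_div]
      rw [eq_div_iff (by linarith : ((k:ℚ) + 1) * x - ((k:ℚ) + 1) + 1 ≠ 0)]
      rw [sub_div' (ne_of_gt hA), div_mul_eq_mul_div, div_eq_iff (ne_of_gt hA)]
      ring

set_option maxHeartbeats 1000000 in
/-- For s ≥ 1, the chain [2^s, s+4, 2^{s−1}, s+2] of length
r = 2s+1 has HJ continued fraction (s²+2s+2)² / ((s²+2s+2)(s²+s+1) − 1), hence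
is a T-chain with parameters (1, s²+2s+2, s²+s+1). -/
theorem optimal_chain_typeI (s : ℕ) (hs : 1 ≤ s) :
    let c : List ℤ := List.replicate s 2 ++ ((s : ℤ) + 4) ::
      (List.replicate (s - 1) 2 ++ [(s : ℤ) + 2])
    c.length = 2 * s + 1 ∧
    hjcf c = ((s : ℚ) ^ 2 + 2 * s + 2) ^ 2 /
      (((s : ℚ) ^ 2 + 2 * s + 2) * ((s : ℚ) ^ 2 + s + 1) - 1) ∧
    IsTChain c 1 ((s : ℤ) ^ 2 + 2 * s + 2) ((s : ℤ) ^ 2 + s + 1) := by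
  obtain ⟨t, rfl⟩ : ∃ t, s = t + 1 := ⟨s - 1, by omega⟩
  intro c
  have hts : (t + 1 : ℕ) - 1 = t := by omega
  have hcast : ((t + 1 : ℕ) : ℤ) = (t : ℤ) + 1 := by exact_mod_cast rfl
  have hcastq : ((t + 1 : ℕ) : ℚ) = (t : ℚ) + 1 := by push_cast; ring
  have hu0 : (0:ℚ) ≤ (t:ℚ) := by positivity
  -- innermost value
  have h1 : hjcf [((t + 1 : ℕ) : ℤ) + 2] = (t : ℚ) + 3 := by
    simp [hjcf]; ring
  have h1gt : 1 < hjcf [((t + 1 : ℕ) : ℤ) + 2] := by rw [h1]; linarith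
  -- middle block of t twos
  obtain ⟨h2gt, h2⟩ := hjcf_rep2 _ h1gt t
  rw [h1] at h2
  have hD1 : (0:ℚ) < (t:ℚ) ^ 2 + 2 * t + 1 := by positivity
  have hD2 : (0:ℚ) < (t:ℚ) ^ 2 + 3 * t + 3 := by positivity
  have h2' : hjcf (List.replicate t 2 ++ [((t + 1 : ℕ) : ℤ) + 2]) =
      ((t:ℚ) ^ 2 + 3 * t + 3) / ((t:ℚ) ^ 2 + 2 * t + 1) := by
    rw [h2, div_eq_div_iff (by nlinarith) (ne_of_gt hD1)]; ring
  -- the (s+4) entry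
  set m : List ℤ := (((t + 1 : ℕ) : ℤ) + 4) ::
      (List.replicate t 2 ++ [((t + 1 : ℕ) : ℤ) + 2]) with hm
  have h3 : hjcf m = ((t:ℚ) ^ 3 + 7 * t ^ 2 + 16 * t + 14) / ((t:ℚ) ^ 2 + 3 * t + 3) := by
    show ((((t + 1 : ℕ) : ℤ) + 4 : ℤ) : ℚ)
        - (hjcf (List.replicate t 2 ++ [((t + 1 : ℕ) : ℤ) + 2]))⁻¹ = _
    rw [h2', inv_div, hcast]
    push_cast
    rw [eq_div_iff (ne_of_gt hD2)]
    field_simp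
    ring
  have h3gt : 1 < hjcf m := by
    rw [h3, lt_div_iff₀ hD2]; nlinarith
  -- outer block of (t+1) twos
  obtain ⟨h4gt, h4⟩ := hjcf_rep2 m h3gt (t + 1)
  have hc : c = List.replicate (t + 1) 2 ++ m := by
    simp only [c, hm, hts]
  have hD3 : (0:ℚ) < ((t:ℚ) ^ 2 + 4 * t + 5) * ((t:ℚ) ^ 2 + 3 * t + 3) - 1 := by nlinarith
  have hygt : 1 < ((t:ℚ) ^ 3 + 7 * t ^ 2 + 16 * t + 14) / ((t:ℚ) ^ 2 + 3 * t + 3) :=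
    h3 ▸ h3gt
  have hval : hjcf c = ((t:ℚ) ^ 2 + 4 * t + 5) ^ 2 /
      (((t:ℚ) ^ 2 + 4 * t + 5) * ((t:ℚ) ^ 2 + 3 * t + 3) - 1) := by
    rw [hc, h4, h3]
    push_cast
    rw [div_eq_div_iff (ne_of_gt (by
      nlinarith [mul_nonneg (by linarith : (0:ℚ) ≤ (t:ℚ) + 1)
        (by linarith : (0:ℚ) ≤ ((t:ℚ) ^ 3 + 7 * t ^ 2 + 16 * t + 14)
          / ((t:ℚ) ^ 2 + 3 * t + 3) - 1)])) (ne_of_gt hD3)]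
    field_simp
    ring
  refine ⟨?_, ?_, ?_⟩
  · simp [c, hts]; omega
  · rw [hval, hcastq]; ring_nf
  · refine ⟨by simp [c], ?_, le_refl 1, by nlinarith [sq_nonneg (t:ℤ), Int.natCast_nonneg t],
      by positivity, by nlinarith [Int.natCast_nonneg t], ?_, ?_⟩
    · intro b hb
      simp only [c, List.mem_append, List.mem_cons, List.mem_replicate,
        List.not_mem_nil, or_false] at hb
      rcases hb with ⟨-, rfl⟩ | rfl | ⟨-, rfl⟩ | rfl <;> omega
    · rw [← Int.isCoprime_iff_gcd_eq_one]
      exact ⟨-(((t + 1 : ℕ)) : ℤ), ((t + 1 : ℕ) : ℤ) + 1, by push_cast; ring⟩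
    · rw [hval]
      push_cast
      rw [div_eq_div_iff (ne_of_gt hD3) (by nlinarith)]
      ring
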